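/- Let ℓ : ℝ≥0 → ℝ be a function with finite support such that ∑ₓ ℓ(x) = 0 and ∑ₓ (x/(x+λ))·ℓ(x) ≥ 0 for every λ > 0. Then ∑ₓ x·ℓ(x) ≥ 0. (Thus the third condition in the definition of a valid one-dimensional move is redundant, being implied by the first two.) -/

import Mathlib

open scoped BigOperators Classical

noncomputable section

/-- The profile `P_x` of a point `x ∈ ℝ≥0`, viewed as a function on `[1,∞]`
(the extended reals `EReal` model the interval with its point `∞ = ⊤`):
`P_x(α) = 1` for `α ∈ [1,2)`, `P_x(α) = (xα - x)/(x + α - 2)` for `α ∈ [2,∞)`,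
and `P_x(∞) = x` (with the conventions `P_0(α) = 0` for `α ∈ [2,∞]`, which the
formula also yields since division by zero is zero). -/
def Pfun (x : ℝ) (α : EReal) : ℝ :=
  if α = ⊤ then x
  else if α.toReal < 2 then 1
  else (x * α.toReal - x) / (x + α.toReal - 2)

/-- A one-dimensional move: a finitely supported function on `ℝ≥0`
(modeled as a function on `ℝ` vanishing on the negatives). -/
def IsMove1 (f : ℝ → ℝ) : Prop :=
  (Function.support f).Finite ∧ ∀ x : ℝ, x < 0 → f x = 0

/-- Validity of a one-dimensional move. -/
def IsValid1 (f : ℝ → ℝ) : Prop :=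
  (∑ᶠ x, f x) = 0 ∧
  (∀ lam : ℝ, 0 < lam → 0 ≤ ∑ᶠ x, (x / (x + lam)) * f x) ∧
  0 ≤ ∑ᶠ x, x * f x

/-- The profile of a one-dimensional move. -/
def prof1 (f : ℝ → ℝ) (α : EReal) : ℝ := ∑ᶠ x, f x * Pfun x α

/-- A two-dimensional move: a finitely supported function on `ℝ≥0 × ℝ≥0`. -/
def IsMove2 (q : ℝ × ℝ → ℝ) : Prop :=
  (Function.support q).Finite ∧ ∀ p : ℝ × ℝ, p.1 < 0 ∨ p.2 < 0 → q p = 0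

/-- A two-dimensional move is horizontally valid if all of its rows are valid. -/
def HorizValid (q : ℝ × ℝ → ℝ) : Prop := ∀ y : ℝ, IsValid1 fun x => q (x, y)

/-- A two-dimensional move is vertically valid if all of its columns are valid. -/
def VertValid (q : ℝ × ℝ → ℝ) : Prop := ∀ x : ℝ, IsValid1 fun y => q (x, y)

/-- The two-variable profile of a two-dimensional move. -/
def prof2 (q : ℝ × ℝ → ℝ) (α β : EReal) : ℝ :=
  ∑ᶠ p : ℝ × ℝ, q p * Pfun p.1 α * Pfun p.2 β

/-- The transpose move `qᵀ(x,y) = q(y,x)`. -/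
def transpose (q : ℝ × ℝ → ℝ) : ℝ × ℝ → ℝ := fun p => q (p.2, p.1)

/-- `pt x y` is the indicator move `⟦x,y⟧`. -/
def pt (x y : ℝ) : ℝ × ℝ → ℝ := fun p => if p = (x, y) then 1 else 0

/-- The move `t_τ = 2·⟦1,1⟧ - ⟦2-τ,0⟧ - ⟦0,2-τ⟧`. -/
def tMove (τ : ℝ) : ℝ × ℝ → ℝ :=
  fun p => 2 * pt 1 1 p - pt (2 - τ) 0 p - pt 0 (2 - τ) p

/-- `slice g b` is the move `g_b`: the part of `g` on the horizontal line `y = b`. -/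
def hslice (g : ℝ × ℝ → ℝ) (b : ℝ) : ℝ × ℝ → ℝ := fun p => if p.2 = b then g p else 0

/-- The third condition in the definition of a valid one-dimensional move is
implied by the first two. -/
theorem stmt_2 (f : ℝ → ℝ) (hmove : IsMove1 f)
    (h1 : (∑ᶠ x, f x) = 0)
    (h2 : ∀ lam : ℝ, 0 < lam → 0 ≤ ∑ᶠ x, (x / (x + lam)) * f x) :
    0 ≤ ∑ᶠ x, x * f x := by
  obtain ⟨hfin, hneg⟩ := hmove
  classical
  set S := hfin.toFinset with hS
  have hsum : ∀ g : ℝ → ℝ, ∑ᶠ x, g x * f x = ∑ x ∈ S, g x * f x := by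
    intro g
    apply finsum_eq_finset_sum_of_support_subset
    intro x hx
    have hfx : f x ≠ 0 := by
      intro h
      simp [Function.mem_support, h] at hx
    simp [hS, Function.mem_support, hfx]
  have key : Filter.Tendsto (fun lam : ℝ => ∑ x ∈ S, (lam * (x / (x + lam))) * f x)
      Filter.atTop (nhds (∑ x ∈ S, x * f x)) := by
    apply tendsto_finset_sum
    intro x hx
    have hx0 : 0 ≤ x := by
      by_contra h
      push_neg at h
      have hz := hneg x h
      simp [hS, Function.mem_support, hz] at hx
    have h1 : Filter.Tendsto (fun lam : ℝ => lam * (x / (x + lam)))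
        Filter.atTop (nhds x) := by
      have hlim : Filter.Tendsto (fun lam : ℝ => x / lam + 1) Filter.atTop (nhds 1) := by
        simpa using (tendsto_const_nhds.div_atTop Filter.tendsto_id).add
          (tendsto_const_nhds : Filter.Tendsto (fun _ : ℝ => (1:ℝ)) Filter.atTop (nhds 1))
      have hmain : Filter.Tendsto (fun lam : ℝ => x / (x / lam + 1))
          Filter.atTop (nhds x) := by
        simpa [Pi.div_def] using (tendsto_const_nhds : Filter.Tendsto (fun _ : ℝ => x)
          Filter.atTop (nhds x)).div hlim one_ne_zero
      apply hmain.congr'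
      filter_upwards [Filter.eventually_gt_atTop 0] with lam hlam
      have h2 : x + lam > 0 := by linarith
      field_simp
    exact h1.mul_const _
  rw [show (∑ᶠ x, x * f x) = ∑ x ∈ S, x * f x from hsum _]
  apply ge_of_tendsto key
  filter_upwards [Filter.eventually_gt_atTop 0] with lam hlam
  have h3 := h2 lam hlam
  rw [hsum] at h3
  have h4 : (0:ℝ) ≤ lam * ∑ x ∈ S, (x / (x + lam)) * f x :=
    mul_nonneg hlam.le h3
  calc (0:ℝ) ≤ lam * ∑ x ∈ S, (x / (x + lam)) * f x := h4
    _ = ∑ x ∈ S, (lam * (x / (x + lam))) * f x := by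
        rw [Finset.mul_sum]; exact Finset.sum_congr rfl fun x _ => by ring
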